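/- For every positive integer d there exists a constant c > 0 such that the following holds: let G be the intersection graph of n ≥ 2 open axis-parallel boxes in ℝ^d, and let H be a comparability graph on the same vertex set V(G). If the graph G ∩ H (the graph on V(G) whose edge set is E(G) ∩ E(H)) contains no clique of size s, then χ(G ∩ H) ≤ c·s·(log n)^d. -/

import Mathlib

lemma padic_between {j m1 m2 : ℕ} (h1 : 0 < m1) (h12 : m1 < m2)
    (v1 : padicValNat 2 m1 = j) (v2 : padicValNat 2 m2 = j) :
    ∃ w, m1 < w ∧ w < m2 ∧ j < padicValNat 2 w := by
  haveI : Fact (Nat.Prime 2) := ⟨Nat.prime_two⟩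
  have h2 : 0 < m2 := h1.trans h12
  have d1 : 2 ^ j ∣ m1 := v1 ▸ pow_padicValNat_dvd
  have d2 : 2 ^ j ∣ m2 := v2 ▸ pow_padicValNat_dvd
  obtain ⟨o1, ho1⟩ := d1
  obtain ⟨o2, ho2⟩ := d2
  have hpj : 0 < 2 ^ j := Nat.pow_pos (by norm_num)
  have odd1 : ¬ 2 ∣ o1 := by
    intro ⟨k, hk⟩
    have : 2 ^ (j + 1) ∣ m1 := ⟨k, by rw [ho1, hk]; ring⟩
    have := (padicValNat_dvd_iff_le h1.ne').mp this
    omega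
  have odd2 : ¬ 2 ∣ o2 := by
    intro ⟨k, hk⟩
    have : 2 ^ (j + 1) ∣ m2 := ⟨k, by rw [ho2, hk]; ring⟩
    have := (padicValNat_dvd_iff_le h2.ne').mp this
    omega
  have ho12 : o1 < o2 := by
    rw [ho1, ho2] at h12
    exact Nat.lt_of_mul_lt_mul_left h12
  have hstep : o1 + 1 < o2 := by
    rcases Nat.lt_or_ge (o1 + 1) o2 with h | h
    · exact h
    · exfalso
      have : o2 = o1 + 1 := by omega
      subst this
      omega
  refine ⟨2 ^ j * (o1 + 1), ?_, ?_, ?_⟩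
  · rw [ho1]; exact (Nat.mul_lt_mul_left hpj).mpr (by omega)
  · rw [ho2]; exact (Nat.mul_lt_mul_left hpj).mpr hstep
  · have : 2 ∣ o1 + 1 := by omega
    obtain ⟨k, hk⟩ := this
    have hw : 2 ^ (j + 1) ∣ 2 ^ j * (o1 + 1) := ⟨k, by rw [hk]; ring⟩
    have hne : 2 ^ j * (o1 + 1) ≠ 0 := by positivity
    have := (padicValNat_dvd_iff_le hne).mp hw
    omega

noncomputable def dyNode (p q : ℕ) : ℕ :=
  if h : p < q then
    Classical.choose ((Finset.Ioc p q).exists_max_image (padicValNat 2) ⟨q, by simp [h]⟩)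
  else 0

lemma dyNode_spec {p q : ℕ} (h : p < q) :
    dyNode p q ∈ Finset.Ioc p q ∧
      ∀ m ∈ Finset.Ioc p q, padicValNat 2 m ≤ padicValNat 2 (dyNode p q) := by
  rw [dyNode, dif_pos h]
  obtain ⟨hm, hmax⟩ := Classical.choose_spec
    ((Finset.Ioc p q).exists_max_image (padicValNat 2) ⟨q, by simp [h]⟩)
  exact ⟨hm, hmax⟩

lemma dyNode_eq {p q p' q' w : ℕ} (h : p < q) (h' : p' < q')
    (hw : w ∈ Finset.Ioc p q) (hw' : w ∈ Finset.Ioc p' q')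
    (hval : padicValNat 2 (dyNode p q) = padicValNat 2 (dyNode p' q')) :
    dyNode p q = dyNode p' q' := by
  obtain ⟨hm, hmax⟩ := dyNode_spec h
  obtain ⟨hm', hmax'⟩ := dyNode_spec h'
  set m := dyNode p q
  set m' := dyNode p' q'
  simp only [Finset.mem_Ioc] at hm hm' hw hw'
  by_contra hne
  rcases Nat.lt_or_ge m m' with hlt | hge
  · obtain ⟨z, hz1, hz2, hz3⟩ := padic_between (Nat.lt_of_le_of_lt (Nat.zero_le p) hm.1)
      hlt rfl hval.symm
    rcases Nat.lt_or_ge q z with hq | hq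
    · have : z ∈ Finset.Ioc p' q' := by
        simp only [Finset.mem_Ioc]
        constructor
        · omega
        · omega
      have := hmax' z this
      omega
    · have : z ∈ Finset.Ioc p q := by simp only [Finset.mem_Ioc]; omega
      have := hmax z this
      omega
  · have hlt : m' < m := by omega
    obtain ⟨z, hz1, hz2, hz3⟩ := padic_between (Nat.lt_of_le_of_lt (Nat.zero_le p') hm'.1)
      hlt rfl hval
    rcases Nat.lt_or_ge q' z with hq | hq
    · have : z ∈ Finset.Ioc p q := by simp only [Finset.mem_Ioc]; omega
      have := hmax z this
      omega
    · have : z ∈ Finset.Ioc p' q' := by simp only [Finset.mem_Ioc]; omega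
      have := hmax' z this
      omega
section Geo
variable {V : Type} [Fintype V] {d : ℕ} (lo hi : V → Fin d → ℝ)

noncomputable def Tset (i : Fin d) : Finset ℝ :=
  Finset.univ.image (fun v => lo v i) ∪ Finset.univ.image (fun v => hi v i)

lemma lo_mem_Tset (v : V) (i : Fin d) : lo v i ∈ Tset lo hi i := by
  simp [Tset]

lemma hi_mem_Tset (v : V) (i : Fin d) : hi v i ∈ Tset lo hi i := by
  simp [Tset]

lemma Tset_card_le (i : Fin d) : (Tset lo hi i).card ≤ 2 * Fintype.card V := by
  calc (Tset lo hi i).card ≤ (Finset.univ.image (fun v => lo v i)).card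
      + (Finset.univ.image (fun v => hi v i)).card := Finset.card_union_le _ _
    _ ≤ Fintype.card V + Fintype.card V := by
        gcongr <;> exact (Finset.card_image_le).trans (by simp)
    _ = 2 * Fintype.card V := by ring

noncomputable def rk (i : Fin d) (x : ℝ) : ℕ :=
  if h : x ∈ Tset lo hi i then
    (((Tset lo hi i).orderIsoOfFin rfl).symm ⟨x, h⟩ : Fin _) else 0

noncomputable def St (i : Fin d) (j : ℕ) : ℝ :=
  if h : j < (Tset lo hi i).card then ((Tset lo hi i).orderIsoOfFin rfl ⟨j, h⟩ : ℝ) else 0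

noncomputable def midpt (i : Fin d) (m : ℕ) : ℝ := (St lo hi i (m - 1) + St lo hi i m) / 2

lemma rk_lt_card {i : Fin d} {x : ℝ} (h : x ∈ Tset lo hi i) :
    rk lo hi i x < (Tset lo hi i).card := by
  rw [rk, dif_pos h]; exact Fin.is_lt _

lemma St_rk {i : Fin d} {x : ℝ} (h : x ∈ Tset lo hi i) : St lo hi i (rk lo hi i x) = x := by
  rw [rk, dif_pos h, St, dif_pos (Fin.is_lt _)]
  have : (⟨((((Tset lo hi i).orderIsoOfFin rfl).symm ⟨x, h⟩ : Fin _) : ℕ), Fin.is_lt _⟩ :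
      Fin (Tset lo hi i).card) = ((Tset lo hi i).orderIsoOfFin rfl).symm ⟨x, h⟩ := by
    ext; rfl
  rw [this]
  simp

lemma St_lt_St {i : Fin d} {j k : ℕ} (hjk : j < k) (hk : k < (Tset lo hi i).card) :
    St lo hi i j < St lo hi i k := by
  rw [St, dif_pos (hjk.trans hk), St, dif_pos hk]
  have := ((Tset lo hi i).orderIsoOfFin rfl).strictMono
    (show (⟨j, hjk.trans hk⟩ : Fin _) < ⟨k, hk⟩ from hjk)
  exact this

lemma St_le_St {i : Fin d} {j k : ℕ} (hjk : j ≤ k) (hk : k < (Tset lo hi i).card) :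
    St lo hi i j ≤ St lo hi i k := by
  rcases eq_or_lt_of_le hjk with rfl | h
  · exact le_refl _
  · exact (St_lt_St lo hi h hk).le

lemma rk_lt_rk {i : Fin d} {x y : ℝ} (hx : x ∈ Tset lo hi i) (hy : y ∈ Tset lo hi i)
    (hxy : x < y) : rk lo hi i x < rk lo hi i y := by
  rw [rk, dif_pos hx, rk, dif_pos hy]
  exact_mod_cast ((Tset lo hi i).orderIsoOfFin rfl).symm.strictMono
    (show (⟨x, hx⟩ : (Tset lo hi i : Set ℝ)) < ⟨y, hy⟩ from hxy)

/-- the key sandwich: the midpoint of the node gap lies strictly inside the interval -/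
lemma midpt_mem {i : Fin d} {x y : ℝ} (hx : x ∈ Tset lo hi i) (hy : y ∈ Tset lo hi i)
    (hxy : x < y) :
    x < midpt lo hi i (dyNode (rk lo hi i x) (rk lo hi i y)) ∧
      midpt lo hi i (dyNode (rk lo hi i x) (rk lo hi i y)) < y := by
  have hpq : rk lo hi i x < rk lo hi i y := rk_lt_rk lo hi hx hy hxy
  obtain ⟨hm, -⟩ := dyNode_spec hpq
  simp only [Finset.mem_Ioc] at hm
  set m := dyNode (rk lo hi i x) (rk lo hi i y)
  have hqcard : rk lo hi i y < (Tset lo hi i).card := rk_lt_card lo hi hy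
  have hmcard : m < (Tset lo hi i).card := lt_of_le_of_lt hm.2 hqcard
  have h1 : x ≤ St lo hi i (m - 1) := by
    nth_rewrite 1 [← St_rk lo hi hx]
    exact St_le_St lo hi (by omega) (by omega)
  have h2 : St lo hi i (m - 1) < St lo hi i m := St_lt_St lo hi (by omega) hmcard
  have h3 : St lo hi i m ≤ y := by
    conv_rhs => rw [← St_rk lo hi hy]
    exact St_le_St lo hi hm.2 hqcard
  constructor
  · have : x < (St lo hi i (m - 1) + St lo hi i m) / 2 := by linarith
    simpa [midpt] using this
  · have : (St lo hi i (m - 1) + St lo hi i m) / 2 < y := by linarith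
    simpa [midpt] using this

end Geo
noncomputable def nodeOf {V : Type} [Fintype V] {d : ℕ} (lo hi : V → Fin d → ℝ)
    (i : Fin d) (v : V) : ℕ :=
  dyNode (rk lo hi i (lo v i)) (rk lo hi i (hi v i))

section Height
variable {V : Type} [Fintype V] {d : ℕ} (lo hi : V → Fin d → ℝ) (nodeOf : Fin d → V → ℕ)
  (r : V → V → Prop)

def nodeOK (v : V) : Prop := ∀ i, lo v i < hi v i

def qrel (u v : V) : Prop :=
  nodeOK lo hi u ∧ nodeOK lo hi v ∧ (∀ i, nodeOf i u = nodeOf i v) ∧ r u v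

open Classical in
noncomputable def chains (v : V) : Finset (Finset V) :=
  Finset.univ.powerset.filter (fun c => v ∈ c ∧ (∀ u ∈ c, u = v ∨ qrel lo hi nodeOf r u v) ∧
    (c : Set V).Pairwise (fun a b => qrel lo hi nodeOf r a b ∨ qrel lo hi nodeOf r b a))

noncomputable def ht (v : V) : ℕ := (chains lo hi nodeOf r v).sup Finset.card

lemma singleton_mem_chains (v : V) : {v} ∈ chains lo hi nodeOf r v := by
  classical
  simp only [chains, Finset.mem_filter, Finset.mem_powerset]
  refine ⟨Finset.subset_univ _, Finset.mem_singleton_self v, ?_, ?_⟩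
  · intro u hu
    simp only [Finset.mem_singleton] at hu
    exact Or.inl hu
  · simp

lemma one_le_ht (v : V) : 1 ≤ ht lo hi nodeOf r v := by
  have h := Finset.le_sup (f := Finset.card) (singleton_mem_chains lo hi nodeOf r v)
  rw [Finset.card_singleton] at h
  exact h

lemma ht_lt_ht (htrans : ∀ a b c : V, r a b → r b c → r a c) (hirr : ∀ a, ¬ r a a)
    {u v : V} (huv : qrel lo hi nodeOf r u v) :
    ht lo hi nodeOf r u < ht lo hi nodeOf r v := by
  classical
  have hq_trans : ∀ a b c : V, qrel lo hi nodeOf r a b → qrel lo hi nodeOf r b c →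
      qrel lo hi nodeOf r a c := by
    rintro a b c ⟨ha, hb, hn, hr⟩ ⟨-, hc, hn', hr'⟩
    exact ⟨ha, hc, fun i => (hn i).trans (hn' i), htrans _ _ _ hr hr'⟩
  have hq_irr : ∀ a, ¬ qrel lo hi nodeOf r a a := fun a h => hirr a h.2.2.2
  rw [ht, Finset.sup_lt_iff (lt_of_lt_of_le Nat.one_pos (one_le_ht lo hi nodeOf r v))]
  intro c hc
  simp only [chains, Finset.mem_filter, Finset.mem_powerset] at hc
  obtain ⟨-, hmem, hbelow, hpair⟩ := hc
  have hvnotin : v ∉ c := by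
    intro hv
    rcases hbelow v hv with rfl | hqvu
    · exact hq_irr v huv
    · exact hq_irr u (hq_trans _ _ _ huv hqvu)
  have hins : insert v c ∈ chains lo hi nodeOf r v := by
    simp only [chains, Finset.mem_filter, Finset.mem_powerset]
    refine ⟨Finset.subset_univ _, Finset.mem_insert_self _ _, ?_, ?_⟩
    · intro w hw
      rcases Finset.mem_insert.mp hw with rfl | hw
      · exact Or.inl rfl
      · rcases hbelow w hw with rfl | hq
        · exact Or.inr huv
        · exact Or.inr (hq_trans _ _ _ hq huv)
    · rw [Finset.coe_insert]
      refine (@Set.pairwise_insert_of_symm _ _ _ _ ⟨?_⟩).mpr ⟨hpair, ?_⟩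
      · intro a b h
        tauto
      · intro b hb _
        rcases hbelow b hb with rfl | hq
        · exact Or.inr huv
        · exact Or.inr (hq_trans _ _ _ hq huv)
  calc c.card < (insert v c).card := by rw [Finset.card_insert_of_notMem hvnotin]; omega
    _ ≤ ht lo hi nodeOf r v := Finset.le_sup (f := Finset.card) hins

lemma ht_le_of_chains_card_le {k : ℕ} {v : V}
    (h : ∀ c ∈ chains lo hi nodeOf r v, c.card ≤ k) : ht lo hi nodeOf r v ≤ k :=
  Finset.sup_le h

end Height

section NodeLemmas
variable {V : Type} [Fintype V] {d : ℕ} (lo hi : V → Fin d → ℝ)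

lemma midpt_node_mem {v : V} (hv : nodeOK lo hi v) (i : Fin d) :
    lo v i < midpt lo hi i (nodeOf lo hi i v) ∧ midpt lo hi i (nodeOf lo hi i v) < hi v i :=
  midpt_mem lo hi (lo_mem_Tset lo hi v i) (hi_mem_Tset lo hi v i) (hv i)

lemma node_val_le {v : V} (hv : nodeOK lo hi v) (i : Fin d) :
    padicValNat 2 (nodeOf lo hi i v) ≤ Nat.log 2 (2 * Fintype.card V) := by
  have hpq : rk lo hi i (lo v i) < rk lo hi i (hi v i) :=
    rk_lt_rk lo hi (lo_mem_Tset lo hi v i) (hi_mem_Tset lo hi v i) (hv i)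
  obtain ⟨hm, -⟩ := dyNode_spec hpq
  simp only [Finset.mem_Ioc] at hm
  have h1 : nodeOf lo hi i v ≤ 2 * Fintype.card V :=
    le_trans (le_trans hm.2 (rk_lt_card lo hi (hi_mem_Tset lo hi v i)).le) (Tset_card_le lo hi i)
  exact le_trans (padicValNat_le_nat_log _) (Nat.log_mono_right h1)

lemma node_eq_of_overlap {v w : V} {x : Fin d → ℝ}
    (hv : ∀ i, lo v i < x i ∧ x i < hi v i) (hw : ∀ i, lo w i < x i ∧ x i < hi w i)
    {i : Fin d}
    (hval : padicValNat 2 (nodeOf lo hi i v) = padicValNat 2 (nodeOf lo hi i w)) :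
    nodeOf lo hi i v = nodeOf lo hi i w := by
  have lv := lo_mem_Tset lo hi v i
  have lw := lo_mem_Tset lo hi w i
  have uv := hi_mem_Tset lo hi v i
  have uw := hi_mem_Tset lo hi w i
  have h1 : rk lo hi i (lo v i) < rk lo hi i (hi v i) :=
    rk_lt_rk lo hi lv uv ((hv i).1.trans (hv i).2)
  have h2 : rk lo hi i (lo w i) < rk lo hi i (hi w i) :=
    rk_lt_rk lo hi lw uw ((hw i).1.trans (hw i).2)
  have h3 : rk lo hi i (lo v i) < rk lo hi i (hi w i) :=
    rk_lt_rk lo hi lv uw ((hv i).1.trans (hw i).2)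
  have h4 : rk lo hi i (lo w i) < rk lo hi i (hi v i) :=
    rk_lt_rk lo hi lw uv ((hw i).1.trans (hv i).2)
  refine dyNode_eq h1 h2
    (w := max (rk lo hi i (lo v i)) (rk lo hi i (lo w i)) + 1) ?_ ?_ hval
  · simp only [Finset.mem_Ioc]; omega
  · simp only [Finset.mem_Ioc]; omega

end NodeLemmas

/-- The open axis-parallel box in `ℝ^d` with lower corner `lo` and upper corner `hi`. -/
def boxSet {d : ℕ} (lo hi : Fin d → ℝ) : Set (Fin d → ℝ) :=
  {x | ∀ i, lo i < x i ∧ x i < hi i}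

set_option synthInstance.maxHeartbeats 400000 in
/-- For every positive integer `d` there is a constant `c > 0` such that: if `G` is the
intersection graph of `n ≥ 2` open boxes in `ℝ^d` and `H` is a comparability graph on the same
vertex set, and `G ⊓ H` has no clique of size `s`, then `χ(G ⊓ H) ≤ c·s·(log₂ n)^d`. -/
theorem stmt8 (d : ℕ) (hd : 0 < d) :
    ∃ c : ℝ, 0 < c ∧
      ∀ (V : Type) [Fintype V] (n : ℕ), Fintype.card V = n → 2 ≤ n →
        ∀ (lo hi : V → Fin d → ℝ) (G H : SimpleGraph V),
          (∀ x y : V, G.Adj x y ↔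
            x ≠ y ∧ (boxSet (lo x) (hi x) ∩ boxSet (lo y) (hi y)).Nonempty) →
          (∃ r : V → V → Prop, (∀ a b c' : V, r a b → r b c' → r a c') ∧ (∀ a : V, ¬ r a a) ∧
            ∀ x y : V, H.Adj x y ↔ (x ≠ y ∧ (r x y ∨ r y x))) →
          ∀ s : ℕ, (G ⊓ H).CliqueFree s →
            ∃ m : ℕ, (G ⊓ H).chromaticNumber ≤ (m : ℕ∞) ∧
              (m : ℝ) ≤ c * (s : ℝ) * (Real.logb 2 n) ^ d := by
  classical
  refine ⟨4 ^ d, by positivity, ?_⟩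
  intro V _ n hn hn2 lo hi G H hG hH s hfree
  haveI : Nonempty V := Fintype.card_pos_iff.mp (by omega)
  obtain ⟨r, rtrans, rirr, hHadj⟩ := hH
  -- s ≥ 2
  have hs2 : 2 ≤ s := by
    by_contra h
    interval_cases s
    · exact hfree ∅ (SimpleGraph.isNClique_empty.mpr rfl)
    · obtain ⟨v⟩ := ‹Nonempty V›
      exact hfree {v} (SimpleGraph.isNClique_one.mpr ⟨v, rfl⟩)
  set K := Nat.log 2 (2 * n) with hK
  -- chains are cliques
  have chain_clique : ∀ v : V, ∀ c ∈ chains lo hi (nodeOf lo hi) r v, (G ⊓ H).IsClique c := by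
    intro v c hc
    simp only [chains, Finset.mem_filter, Finset.mem_powerset] at hc
    intro a ha b hb hab
    rcases hc.2.2.2 ha hb hab with hq | hq
    · refine ⟨(hG a b).mpr ⟨hab, ⟨fun i => midpt lo hi i (nodeOf lo hi i a), ?_, ?_⟩⟩,
        (hHadj a b).mpr ⟨hab, Or.inl hq.2.2.2⟩⟩
      · exact fun i => midpt_node_mem lo hi hq.1 i
      · intro i
        show lo b i < midpt lo hi i (nodeOf lo hi i a) ∧ midpt lo hi i (nodeOf lo hi i a) < hi b i
        rw [show nodeOf lo hi i a = nodeOf lo hi i b from hq.2.2.1 i]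
        exact midpt_node_mem lo hi hq.2.1 i
    · refine ⟨(hG a b).mpr ⟨hab, ⟨fun i => midpt lo hi i (nodeOf lo hi i a), ?_, ?_⟩⟩,
        (hHadj a b).mpr ⟨hab, Or.inr hq.2.2.2⟩⟩
      · exact fun i => midpt_node_mem lo hi hq.2.1 i
      · intro i
        show lo b i < midpt lo hi i (nodeOf lo hi i a) ∧ midpt lo hi i (nodeOf lo hi i a) < hi b i
        rw [show nodeOf lo hi i a = nodeOf lo hi i b from (hq.2.2.1 i).symm]
        exact midpt_node_mem lo hi hq.1 i
  -- height bound
  have hht_le : ∀ v : V, ht lo hi (nodeOf lo hi) r v ≤ s - 1 := by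
    intro v
    refine ht_le_of_chains_card_le lo hi (nodeOf lo hi) r (fun c hc => ?_)
    by_contra h
    obtain ⟨t, htc, htcard⟩ := Finset.exists_subset_card_eq (show s ≤ c.card by omega)
    exact hfree t ⟨(chain_clique v c hc).subset htc, htcard⟩
  have hht_1 : ∀ v : V, 1 ≤ ht lo hi (nodeOf lo hi) r v := one_le_ht lo hi (nodeOf lo hi) r
  -- valuation bound
  have hvalK : ∀ v : V, nodeOK lo hi v → ∀ i, padicValNat 2 (nodeOf lo hi i v) < K + 1 := by
    intro v hv i
    have := node_val_le lo hi hv i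
    rw [hn] at this
    omega
  -- the coloring
  set σ := Option ((Fin d → Fin (K + 1)) × Fin (s - 1)) with hσ
  have hcol : ∃ C : V → σ, ∀ v w : V, (G ⊓ H).Adj v w → C v ≠ C w := by
    refine ⟨fun v => if hv : nodeOK lo hi v then
      some (fun i => ⟨padicValNat 2 (nodeOf lo hi i v), hvalK v hv i⟩,
        ⟨ht lo hi (nodeOf lo hi) r v - 1, by have := hht_le v; have := hht_1 v; omega⟩)
      else none, ?_⟩
    intro v w hadj
    obtain ⟨hGadj, hHadj'⟩ := hadj
    obtain ⟨hne, x, hxv, hxw⟩ := (hG v w).mp hGadj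
    have hv : nodeOK lo hi v := fun i => (hxv i).1.trans (hxv i).2
    have hw : nodeOK lo hi w := fun i => (hxw i).1.trans (hxw i).2
    dsimp only
    rw [dif_pos hv, dif_pos hw]
    intro hEq
    have hEq' := Option.some_injective _ hEq
    have hEq1 := congrArg Prod.fst hEq'
    have hEq2 := congrArg Prod.snd hEq'
    simp only at hEq1 hEq2
    have hval : ∀ i, padicValNat 2 (nodeOf lo hi i v) = padicValNat 2 (nodeOf lo hi i w) := by
      intro i
      exact congrArg Fin.val (congrFun hEq1 i)
    have hnode : ∀ i, nodeOf lo hi i v = nodeOf lo hi i w :=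
      fun i => node_eq_of_overlap lo hi hxv hxw (hval i)
    have hqrel : qrel lo hi (nodeOf lo hi) r v w ∨ qrel lo hi (nodeOf lo hi) r w v := by
      rcases ((hHadj v w).mp hHadj').2 with hr | hr
      · exact Or.inl ⟨hv, hw, hnode, hr⟩
      · exact Or.inr ⟨hw, hv, fun i => (hnode i).symm, hr⟩
    have hhtne : ht lo hi (nodeOf lo hi) r v ≠ ht lo hi (nodeOf lo hi) r w := by
      rcases hqrel with hq | hq
      · exact (ht_lt_ht lo hi (nodeOf lo hi) r rtrans rirr hq).ne
      · exact (ht_lt_ht lo hi (nodeOf lo hi) r rtrans rirr hq).ne'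
    have hEq2' := congrArg Fin.val hEq2
    simp only at hEq2'
    have h1 := hht_1 v; have h2 := hht_1 w
    omega
  obtain ⟨C, hCvalid⟩ := hcol
  haveI : Nonempty σ := ⟨none⟩
  have hcolorable : (G ⊓ H).Colorable (Fintype.card σ) :=
    (SimpleGraph.Coloring.mk C (fun {v w} h => hCvalid v w h)).colorable
  refine ⟨Fintype.card σ, hcolorable.chromaticNumber_le, ?_⟩
  -- cardinality computation and final bound
  have hcard : Fintype.card σ = (K + 1) ^ d * (s - 1) + 1 := by
    simp [hσ, Fintype.card_option, Fintype.card_prod, Fintype.card_fun, Fintype.card_fin,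
      mul_comm]
  have hcardle : Fintype.card σ ≤ (K + 1) ^ d * s := by
    rw [hcard]
    have h1 : 1 ≤ (K + 1) ^ d := Nat.one_le_pow _ _ (by omega)
    calc (K + 1) ^ d * (s - 1) + 1 ≤ (K + 1) ^ d * (s - 1) + (K + 1) ^ d := by omega
      _ = (K + 1) ^ d * (s - 1 + 1) := by ring
      _ = (K + 1) ^ d * s := by congr 1; omega
  -- real arithmetic
  set L := Real.logb 2 n with hL
  have hL1 : (1 : ℝ) ≤ L := by
    rw [hL]
    calc (1 : ℝ) = Real.logb 2 2 := (Real.logb_self_eq_one (by norm_num)).symm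
      _ ≤ Real.logb 2 n := Real.logb_le_logb_of_le (by norm_num) (by norm_num)
        (by exact_mod_cast hn2)
  have hKL : (K : ℝ) + 1 ≤ 4 * L := by
    have h1 : (K : ℝ) ≤ Real.logb 2 (2 * n : ℕ) := Real.natLog_le_logb _ _
    have h2 : Real.logb 2 (2 * n : ℕ) = 1 + L := by
      push_cast
      rw [Real.logb_mul (by norm_num) (by positivity), Real.logb_self_eq_one (by norm_num)]
    rw [h2] at h1
    linarith
  have hfinal : ((Fintype.card σ : ℕ) : ℝ) ≤ 4 ^ d * s * L ^ d := by
    calc ((Fintype.card σ : ℕ) : ℝ) ≤ (((K + 1) ^ d * s : ℕ) : ℝ) := by exact_mod_cast hcardle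
      _ = ((K : ℝ) + 1) ^ d * s := by push_cast; ring
      _ ≤ (4 * L) ^ d * s := by
          have hK0 : (0:ℝ) ≤ (K:ℝ) + 1 := by positivity
          gcongr <;> linarith
      _ = 4 ^ d * s * L ^ d := by rw [mul_pow]; ring
  exact hfinal
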